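/- Under Assouad's lemma with the hypercube of Proposition 3.1: if for every pair of neighboring corners the affinity is at least 1 − √(ατ/2) and neighboring corners are at ℓ_1 distance 2τ/n, then any estimator (in particular any α-DP mechanism Q_n) satisfies sup_θ R(θ,Q_n) ≥ (k−1)·(τ/(2n))·(1 − √(ατ/2)). Choosing τ = t/α with t < 1 and α < 1 yields sup_θ R(θ,Q_n) ≥ c_0(k−1)/(αn). -/

import Mathlib

open MeasureTheory
open scoped ENNReal

noncomputable def l1 {k : ℕ} (θ θ' : Fin k → ℝ) : ℝ := ∑ j, |θ j - θ' j|

open Classical in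
noncomputable def corner (n τ K : ℕ) (σ : Fin K → Bool) : Fin (K + 1) → ℝ :=
  fun j =>
    if h : (j : ℕ) < K then (if σ ⟨j, h⟩ then (τ : ℝ) / n else 0)
    else ((n : ℝ) - τ * ((Finset.univ.filter fun i => σ i = true).card : ℝ)) / n

lemma corner_castSucc (n τ K : ℕ) (σ : Fin K → Bool) (i : Fin K) :
    corner n τ K σ i.castSucc = if σ i then (τ : ℝ) / n else 0 := by
  simp [corner, i.isLt]

lemma update_involutive (K : ℕ) (i : Fin K) :
    Function.Involutive (fun σ : Fin K → Bool => Function.update σ i (!σ i)) := by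
  intro σ
  funext j
  rcases eq_or_ne j i with rfl | hji
  · simp
  · simp [Function.update_apply, hji]

lemma g_meas {K : ℕ} (j : Fin (K + 1)) (c : ℝ) :
    Measurable (fun t : Fin (K + 1) → ℝ => ENNReal.ofReal |t j - c|) :=
  ((measurable_pi_apply j).sub measurable_const).abs.ennreal_ofReal

/-- **Assouad's lemma for the DP hypercube.** If at every pair of neighboring corners
(which are at `ℓ₁` distance `2τ/n`) the affinity of the output distributions is at
least `1 - √(ατ/2)`, then the worst-case `ℓ₁` risk is at least
`(k-1)·(τ/(2n))·(1 - √(ατ/2))` (with `k - 1 = K`): some corner has risk that large. -/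
theorem stmt17 {n τ K : ℕ} (hn : 0 < n) (hτ : 0 < τ) (hτK : τ * K ≤ n)
    (Q : (Fin (K + 1) → ℝ) → Measure (Fin (K + 1) → ℝ))
    (hprob : ∀ θ, IsProbabilityMeasure (Q θ)) (α : ℝ) (hα : 0 < α)
    (haff : ∀ (σ : Fin K → Bool) (i : Fin K),
      ENNReal.ofReal (1 - Real.sqrt (α * τ / 2)) ≤
        (Q (corner n τ K σ) ⊓ Q (corner n τ K (Function.update σ i (!σ i)))) Set.univ) :
    ∃ σ : Fin K → Bool,
      ENNReal.ofReal ((K : ℝ) * ((τ : ℝ) / (2 * n)) * (1 - Real.sqrt (α * τ / 2))) ≤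
        ∫⁻ t, ENNReal.ofReal (l1 t (corner n τ K σ)) ∂(Q (corner n τ K σ)) := by
  set c : ℝ := 1 - Real.sqrt (α * τ / 2) with hc
  by_cases hcn : c ≤ 0
  · refine ⟨fun _ => false, ?_⟩
    have h0 : (K : ℝ) * ((τ : ℝ) / (2 * n)) * c ≤ 0 :=
      mul_nonpos_of_nonneg_of_nonpos (by positivity) hcn
    simp [ENNReal.ofReal_eq_zero.mpr h0]
  push_neg at hcn
  have hn' : (0:ℝ) < n := by exact_mod_cast hn
  have hτ' : (0:ℝ) < τ := by exact_mod_cast hτ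
  set μ : (Fin K → Bool) → Measure (Fin (K + 1) → ℝ) := fun σ => Q (corner n τ K σ) with hμ
  set c' : ℝ≥0∞ := ENNReal.ofReal c with hc'
  set δ : ℝ≥0∞ := ENNReal.ofReal ((τ : ℝ) / (2 * n)) with hδ
  set g : Fin K → (Fin K → Bool) → (Fin (K + 1) → ℝ) → ℝ≥0∞ :=
    fun i σ t => ENNReal.ofReal |t i.castSucc - corner n τ K σ i.castSucc| with hg
  have hgmeas : ∀ i σ, Measurable (g i σ) := fun i σ => g_meas _ _
  set f : (Fin K → Bool) → Fin K → ℝ≥0∞ := fun σ i => ∫⁻ t, g i σ t ∂ μ σ with hf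
  have h2δ : 2 * δ = ENNReal.ofReal ((τ : ℝ) / n) := by
    rw [hδ, ← ENNReal.ofReal_ofNat 2, ← ENNReal.ofReal_mul (by norm_num)]
    congr 1
    field_simp
  -- pair bound
  have hpair : ∀ (σ : Fin K → Bool) (i : Fin K),
      2 * δ * c' ≤ f σ i + f (Function.update σ i (!σ i)) i := by
    intro σ i
    set σ' := Function.update σ i (!σ i) with hσ'
    have hcorner : |corner n τ K σ i.castSucc - corner n τ K σ' i.castSucc| = (τ : ℝ) / n := by
      rw [corner_castSucc, corner_castSucc, hσ', Function.update_self]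
      cases hb : σ i <;> simp [abs_of_nonneg, abs_of_nonpos, hτ'.le, hn'.le, le_of_lt,
        div_nonneg hτ'.le hn'.le, abs_of_nonneg (div_nonneg hτ'.le hn'.le)]
    have hpt : ∀ t : Fin (K + 1) → ℝ, ENNReal.ofReal ((τ : ℝ) / n) ≤ g i σ t + g i σ' t := by
      intro t
      rw [hg, ← ENNReal.ofReal_add (abs_nonneg _) (abs_nonneg _)]
      apply ENNReal.ofReal_le_ofReal
      calc (τ : ℝ) / n = |corner n τ K σ i.castSucc - corner n τ K σ' i.castSucc| := hcorner.symm
        _ ≤ |corner n τ K σ i.castSucc - t i.castSucc| + |t i.castSucc - corner n τ K σ' i.castSucc| :=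
            abs_sub_le _ _ _
        _ = |t i.castSucc - corner n τ K σ i.castSucc| + |t i.castSucc - corner n τ K σ' i.castSucc| := by
            rw [abs_sub_comm]
    set ν : Measure (Fin (K + 1) → ℝ) := μ σ ⊓ μ σ' with hν
    calc 2 * δ * c' = ENNReal.ofReal ((τ : ℝ) / n) * c' := by rw [h2δ]
      _ ≤ ENNReal.ofReal ((τ : ℝ) / n) * ν Set.univ := mul_le_mul_right (haff σ i) _
      _ = ∫⁻ _, ENNReal.ofReal ((τ : ℝ) / n) ∂ν := (lintegral_const _).symm
      _ ≤ ∫⁻ t, g i σ t + g i σ' t ∂ν := lintegral_mono hpt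
      _ = (∫⁻ t, g i σ t ∂ν) + ∫⁻ t, g i σ' t ∂ν := lintegral_add_left (hgmeas i σ) _
      _ ≤ f σ i + f σ' i :=
        add_le_add (lintegral_mono' inf_le_left le_rfl) (lintegral_mono' inf_le_right le_rfl)
  -- reindexing
  have hreidx : ∀ i : Fin K, ∑ σ : Fin K → Bool, f (Function.update σ i (!σ i)) i = ∑ σ, f σ i :=
    fun i => (update_involutive K i).bijective.sum_comp (fun σ => f σ i)
  have hcard : Fintype.card (Fin K → Bool) = 2 ^ K := by simp
  -- per-coordinate sum bound
  have hS : ∀ i : Fin K, (2 ^ K : ℕ) • (2 * δ * c') ≤ 2 * ∑ σ, f σ i := by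
    intro i
    have h1 := Finset.card_nsmul_le_sum Finset.univ
      (fun σ => f σ i + f (Function.update σ i (!σ i)) i) (2 * δ * c')
      (fun σ _ => hpair σ i)
    rw [Finset.sum_add_distrib, hreidx i, Finset.card_univ, hcard, ← two_mul] at h1
    exact h1
  -- total
  have htot : (K : ℝ≥0∞) * ((2 ^ K : ℕ) • (2 * δ * c')) ≤ 2 * ∑ σ, ∑ i, f σ i := by
    calc (K : ℝ≥0∞) * ((2 ^ K : ℕ) • (2 * δ * c'))
        = ∑ _i : Fin K, (2 ^ K : ℕ) • (2 * δ * c') := by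
          simp [Finset.sum_const, nsmul_eq_mul]
      _ ≤ ∑ i : Fin K, 2 * ∑ σ, f σ i := Finset.sum_le_sum (fun i _ => hS i)
      _ = 2 * ∑ i : Fin K, ∑ σ, f σ i := by rw [Finset.mul_sum]
      _ = 2 * ∑ σ, ∑ i, f σ i := by rw [Finset.sum_comm]
  -- risk lower bound per corner
  set R : (Fin K → Bool) → ℝ≥0∞ :=
    fun σ => ∫⁻ t, ENNReal.ofReal (l1 t (corner n τ K σ)) ∂ μ σ with hR
  have hRσ : ∀ σ, ∑ i, f σ i ≤ R σ := by
    intro σ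
    rw [hf]
    rw [← lintegral_finset_sum _ (fun i _ => hgmeas i σ)]
    apply lintegral_mono
    intro t
    simp only [l1]
    rw [ENNReal.ofReal_sum_of_nonneg (fun j _ => abs_nonneg _), Fin.sum_univ_castSucc]
    exact self_le_add_right _ _
  -- pick the max
  obtain ⟨σm, -, hmax⟩ := Finset.exists_max_image Finset.univ R ⟨fun _ => false, Finset.mem_univ _⟩
  refine ⟨σm, ?_⟩
  have hsummax : ∑ σ, R σ ≤ (2 ^ K : ℕ) • R σm := by
    have := Finset.sum_le_card_nsmul Finset.univ R (R σm) (fun σ _ => hmax σ (Finset.mem_univ σ))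
    rwa [Finset.card_univ, hcard] at this
  have hchain : (K : ℝ≥0∞) * ((2 ^ K : ℕ) • (2 * δ * c')) ≤ 2 * ((2 ^ K : ℕ) • R σm) := by
    calc (K : ℝ≥0∞) * ((2 ^ K : ℕ) • (2 * δ * c')) ≤ 2 * ∑ σ, ∑ i, f σ i := htot
      _ ≤ 2 * ∑ σ, R σ := by
          exact mul_le_mul_right (Finset.sum_le_sum (fun σ _ => hRσ σ)) 2
      _ ≤ 2 * ((2 ^ K : ℕ) • R σm) := mul_le_mul_right hsummax 2
  -- cancel the factor 2 * 2^K
  have hkey : (K : ℝ≥0∞) * δ * c' ≤ R σm := by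
    have h2K : ((2 : ℝ≥0∞) * (2 ^ K : ℝ≥0∞)) ≠ 0 :=
      mul_ne_zero two_ne_zero (pow_ne_zero _ two_ne_zero)
    have h2K' : ((2 : ℝ≥0∞) * (2 ^ K : ℝ≥0∞)) ≠ ⊤ :=
      ENNReal.mul_ne_top ENNReal.ofNat_ne_top (ENNReal.pow_ne_top ENNReal.ofNat_ne_top)
    rw [← ENNReal.mul_le_mul_iff_right h2K h2K']
    calc (2 * 2 ^ K : ℝ≥0∞) * ((K : ℝ≥0∞) * δ * c')
        = (K : ℝ≥0∞) * ((2 ^ K : ℕ) • (2 * δ * c')) := by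
          rw [nsmul_eq_mul]; push_cast; ring
      _ ≤ 2 * ((2 ^ K : ℕ) • R σm) := hchain
      _ = (2 * 2 ^ K : ℝ≥0∞) * R σm := by rw [nsmul_eq_mul]; push_cast; ring
  calc ENNReal.ofReal ((K : ℝ) * ((τ : ℝ) / (2 * n)) * c)
      = (K : ℝ≥0∞) * δ * c' := by
        rw [ENNReal.ofReal_mul (by positivity), ENNReal.ofReal_mul (by positivity),
          ENNReal.ofReal_natCast]
    _ ≤ R σm := hkey
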